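/- Let d ≥ 2, let 0 < a < 1, and let z ∈ ℝ^d have all entries positive. Suppose ρ is a d×d bipartite quantum state and {A_x}_{x=1}^{3d}, {B_y}_{y=1}^{3d} are POVMs with 3d outcomes on each side such that tr(ρ·(A_x ⊗ B_y)) = Q_{xy} for all x,y ∈ [3d]. Then the matrices A_P = ∑_{x=1}^{2d} A_x and B_P = ∑_{y=1}^{2d} B_y both have rank d, i.e. they are invertible. -/

import Mathlib

open Matrix Kronecker ComplexOrder

/-- The correlation `P`, as a `2d × 2d` matrix indexed by `Fin d ⊕ Fin d`, given in block form
by `P = (1/(d(d+1)²)) · [[d²·I_d, J_d], [J_d, I_d]]`. -/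
noncomputable def Pmat (d : ℕ) : Matrix (Fin d ⊕ Fin d) (Fin d ⊕ Fin d) ℝ :=
  fun x y =>
    (1 / (d * (d + 1) ^ 2)) *
      match x, y with
      | Sum.inl i, Sum.inl j => if i = j then (d : ℝ) ^ 2 else 0
      | Sum.inl _, Sum.inr _ => 1
      | Sum.inr _, Sum.inl _ => 1
      | Sum.inr i, Sum.inr j => if i = j then 1 else 0

/-- The correlation `Q`, as a `3d × 3d` matrix indexed by `(Fin d ⊕ Fin d) ⊕ Fin d`:
top-left `2d × 2d` block `a·P`, top-right block `e·zᵀ` stacked on `diag(z)`, bottom-left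
block `z·eᵀ` next to `diag(z)`, and bottom-right block `(d(d+1)²/a)·diag(z)²`. -/
noncomputable def Qmat (d : ℕ) (a : ℝ) (z : Fin d → ℝ) :
    Matrix ((Fin d ⊕ Fin d) ⊕ Fin d) ((Fin d ⊕ Fin d) ⊕ Fin d) ℝ :=
  fun x y =>
    match x, y with
    | Sum.inl p, Sum.inl q => a * Pmat d p q
    | Sum.inl (Sum.inl _), Sum.inr j => z j
    | Sum.inl (Sum.inr i), Sum.inr j => if i = j then z i else 0
    | Sum.inr i, Sum.inl (Sum.inl _) => z i
    | Sum.inr i, Sum.inl (Sum.inr j) => if i = j then z i else 0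
    | Sum.inr i, Sum.inr j => (d * (d + 1) ^ 2 / a) * (if i = j then (z i) ^ 2 else 0)

open scoped MatrixOrder in
noncomputable def Matrix.PosSemidef.sqrt {n : Type*} [Fintype n] [DecidableEq n]
    {M : Matrix n n ℂ} (_hM : M.PosSemidef) : Matrix n n ℂ := CFC.sqrt M

open scoped MatrixOrder in
lemma Matrix.PosSemidef.posSemidef_sqrt {n : Type*} [Fintype n] [DecidableEq n]
    {M : Matrix n n ℂ} (hM : M.PosSemidef) : hM.sqrt.PosSemidef :=
  (CFC.sqrt_nonneg M).posSemidef

open scoped MatrixOrder in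
lemma Matrix.PosSemidef.sqrt_mul_self {n : Type*} [Fintype n] [DecidableEq n]
    {M : Matrix n n ℂ} (hM : M.PosSemidef) : hM.sqrt * hM.sqrt = M :=
  CFC.sqrt_mul_sqrt_self M hM.nonneg

namespace Stmt15Aux

variable {d : ℕ}

/-- trace (Tᴴ * T) = 0 implies T = 0 -/
lemma eq_zero_of_trace_conj_mul_self {n m : Type*} [Fintype n] [Fintype m]
    (T : Matrix n m ℂ) (h : (Tᴴ * T).trace = 0) : T = 0 := by
  have h' : ∑ j, star (fun i => T i j) ⬝ᵥ (fun i => T i j) = 0 := by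
    simpa [Matrix.trace, Matrix.diag, Matrix.mul_apply, Matrix.conjTranspose_apply,
      dotProduct] using h
  have hc : ∀ j ∈ Finset.univ, star (fun i => T i j) ⬝ᵥ (fun i => T i j) = 0 := by
    rw [Finset.sum_eq_zero_iff_of_nonneg] at h'
    · exact h'
    · intro j _
      exact Finset.sum_nonneg fun i _ => star_mul_self_nonneg _
  ext i j
  have := (dotProduct_star_self_eq_zero (v := fun i => T i j)).mp (hc j (Finset.mem_univ j))
  simpa using congrFun this i

lemma kron_conjTranspose {n m p q : Type*} (X : Matrix n m ℂ) (Y : Matrix p q ℂ) :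
    (X ⊗ₖ Y)ᴴ = Xᴴ ⊗ₖ Yᴴ := by
  ext ⟨i, j⟩ ⟨k, l⟩
  simp [Matrix.conjTranspose_apply, Matrix.kroneckerMap_apply, star_mul', mul_comm]

lemma slice_left (X : Matrix (Fin d) (Fin d) ℂ)
    (W : Matrix (Fin d × Fin d) (Fin d × Fin d) ℂ) (a b : Fin d) (q : Fin d × Fin d) :
    ((X ⊗ₖ (1 : Matrix (Fin d) (Fin d) ℂ)) * W) (a, b) q
      = (X *ᵥ fun a' => W (a', b) q) a := by
  simp [Matrix.mul_apply, Matrix.mulVec, dotProduct, Fintype.sum_prod_type,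
    Matrix.kroneckerMap_apply, Matrix.one_apply, mul_ite, ite_mul, mul_assoc]

lemma slice_right (Y : Matrix (Fin d) (Fin d) ℂ)
    (W : Matrix (Fin d × Fin d) (Fin d × Fin d) ℂ) (a b : Fin d) (q : Fin d × Fin d) :
    (((1 : Matrix (Fin d) (Fin d) ℂ) ⊗ₖ Y) * W) (a, b) q
      = (Y *ᵥ fun b' => W (a, b') q) b := by
  simp [Matrix.mul_apply, Matrix.mulVec, dotProduct, Fintype.sum_prod_type,
    Matrix.kroneckerMap_apply, Matrix.one_apply, mul_ite, ite_mul, mul_assoc]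

/-- d+1 vectors in ℂ^d with the given annihilation pattern is impossible. -/
lemma no_such_family (c : Fin d → Matrix (Fin d) (Fin d) ℂ) (v : Fin d → ℂ) (hv : v ≠ 0)
    (u : Fin d → Fin d → ℂ)
    (hcv : ∀ i, c i *ᵥ v = 0)
    (hcu : ∀ i k, k ≠ i → c k *ᵥ u i = 0)
    (hne : ∀ i, c i *ᵥ u i ≠ 0) : False := by
  have hli : LinearIndependent ℂ (fun o : Option (Fin d) => o.elim v u) := by
    rw [Fintype.linearIndependent_iff]
    intro g hg
    have hsome : ∀ i, g (some i) = 0 := by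
      intro i
      have h2 := congrArg (fun w => (c i).mulVecLin w) hg
      simp only [map_sum, _root_.map_smul, Matrix.mulVecLin_apply, map_zero] at h2
      rw [Fintype.sum_option] at h2
      simp only [Option.elim, Matrix.mulVec_smul] at h2
      rw [hcv i] at h2
      have h3 : ∑ k, g (some k) • (c i *ᵥ u k) = g (some i) • (c i *ᵥ u i) := by
        rw [Finset.sum_eq_single i]
        · intro k _ hk
          rw [hcu k i (Ne.symm hk), smul_zero]
        · simp
      rw [h3, smul_zero, zero_add] at h2
      rcases smul_eq_zero.mp h2 with h | h
      · exact h
      · exact absurd h (hne i)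
    intro o
    match o with
    | some i => exact hsome i
    | none =>
      rw [Fintype.sum_option] at hg
      simp only [Option.elim] at hg
      rw [Finset.sum_eq_zero (fun k _ => by rw [hsome k, zero_smul]), add_zero] at hg
      rcases smul_eq_zero.mp hg with h | h
      · exact h
      · exact absurd h hv
  have hcard := hli.fintype_card_le_finrank
  rw [Module.finrank_fintype_fun_eq_card] at hcard
  simp [Fintype.card_option] at hcard

lemma sum_mulVec {n : Type*} [Fintype n] {ι : Type*} (s : Finset ι)
    (M : ι → Matrix n n ℂ) (v : n → ℂ) :
    (∑ i ∈ s, M i) *ᵥ v = ∑ i ∈ s, M i *ᵥ v := by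
  ext a
  simp only [Matrix.mulVec, dotProduct, Finset.sum_apply, Matrix.sum_apply, Finset.sum_mul]
  rw [Finset.sum_comm]

lemma sqrt_kill {n : Type*} [Fintype n] [DecidableEq n] {M : Matrix n n ℂ}
    (hM : M.PosSemidef) {v : n → ℂ} (h : star v ⬝ᵥ M *ᵥ v = 0) :
    hM.sqrt *ᵥ v = 0 := by
  set s := hM.sqrt with hs
  have hherm : sᴴ = s := hM.posSemidef_sqrt.1
  have hss : s * s = M := hM.sqrt_mul_self
  have key : star (s *ᵥ v) ⬝ᵥ (s *ᵥ v) = 0 := by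
    rw [star_mulVec, hherm, ← dotProduct_mulVec, mulVec_mulVec, hss]
    exact h
  exact dotProduct_star_self_eq_zero.mp key

/-- Extraction of the left family from the kronecker annihilation pattern. -/
lemma left_family (r : Matrix (Fin d × Fin d) (Fin d × Fin d) ℂ)
    (c e : Fin d → Matrix (Fin d) (Fin d) ℂ)
    (hz : ∀ k i, k ≠ i → (c k ⊗ₖ e i) * r = 0)
    (hnz : ∀ i, (c i ⊗ₖ e i) * r ≠ 0) :
    ∀ i, ∃ ui : Fin d → ℂ, (∀ k, k ≠ i → c k *ᵥ ui = 0) ∧ c i *ᵥ ui ≠ 0 := by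
  intro i
  set W : Matrix (Fin d × Fin d) (Fin d × Fin d) ℂ := ((1 : Matrix (Fin d) (Fin d) ℂ) ⊗ₖ e i) * r
    with hW
  have hsplit : ∀ X : Matrix (Fin d) (Fin d) ℂ,
      (X ⊗ₖ (1 : Matrix (Fin d) (Fin d) ℂ)) * W = (X ⊗ₖ e i) * r := by
    intro X
    rw [hW, ← mul_assoc, ← mul_kronecker_mul, mul_one, one_mul]
  have hne' : (c i ⊗ₖ (1 : Matrix (Fin d) (Fin d) ℂ)) * W ≠ 0 := by
    rw [hsplit]; exact hnz i
  have hent : ∃ p q, ((c i ⊗ₖ (1 : Matrix (Fin d) (Fin d) ℂ)) * W) p q ≠ 0 := by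
    by_contra hcon
    push_neg at hcon
    exact hne' (by ext p q; exact hcon p q)
  obtain ⟨⟨α, β⟩, q, hpq⟩ := hent
  refine ⟨fun a' => W (a', β) q, ?_, ?_⟩
  · intro k hk
    have h0 : (c k ⊗ₖ (1 : Matrix (Fin d) (Fin d) ℂ)) * W = 0 := by
      rw [hsplit]; exact hz k i hk
    ext a
    have := congrFun (congrFun h0 (a, β)) q
    rw [slice_left] at this
    simpa using this
  · intro hcon
    apply hpq
    rw [slice_left (c i) W α β q, hcon]
    simp

/-- Extraction of the right family. -/
lemma right_family (r : Matrix (Fin d × Fin d) (Fin d × Fin d) ℂ)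
    (c e : Fin d → Matrix (Fin d) (Fin d) ℂ)
    (hz : ∀ k i, k ≠ i → (c k ⊗ₖ e i) * r = 0)
    (hnz : ∀ i, (c i ⊗ₖ e i) * r ≠ 0) :
    ∀ j, ∃ mj : Fin d → ℂ, (∀ k, k ≠ j → e k *ᵥ mj = 0) ∧ e j *ᵥ mj ≠ 0 := by
  intro j
  set W : Matrix (Fin d × Fin d) (Fin d × Fin d) ℂ := (c j ⊗ₖ (1 : Matrix (Fin d) (Fin d) ℂ)) * r
    with hW
  have hsplit : ∀ Y : Matrix (Fin d) (Fin d) ℂ,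
      ((1 : Matrix (Fin d) (Fin d) ℂ) ⊗ₖ Y) * W = (c j ⊗ₖ Y) * r := by
    intro Y
    rw [hW, ← mul_assoc, ← mul_kronecker_mul, mul_one, one_mul]
  have hne' : ((1 : Matrix (Fin d) (Fin d) ℂ) ⊗ₖ e j) * W ≠ 0 := by
    rw [hsplit]; exact hnz j
  have hent : ∃ p q, (((1 : Matrix (Fin d) (Fin d) ℂ) ⊗ₖ e j) * W) p q ≠ 0 := by
    by_contra hcon
    push_neg at hcon
    exact hne' (by ext p q; exact hcon p q)
  obtain ⟨⟨α, β⟩, q, hpq⟩ := hent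
  refine ⟨fun b' => W (α, b') q, ?_, ?_⟩
  · intro k hk
    have h0 : ((1 : Matrix (Fin d) (Fin d) ℂ) ⊗ₖ e k) * W = 0 := by
      rw [hsplit]; exact hz j k (Ne.symm hk)
    ext b
    have := congrFun (congrFun h0 (α, b)) q
    rw [slice_right] at this
    simpa using this
  · intro hcon
    apply hpq
    rw [slice_right (e j) W α β q, hcon]
    simp

end Stmt15Aux

namespace Stmt15Aux

lemma dot_sum {n : Type*} [Fintype n] {ι : Type*} (v : n → ℂ) (s : Finset ι) (w : ι → n → ℂ) :
    v ⬝ᵥ (∑ i ∈ s, w i) = ∑ i ∈ s, v ⬝ᵥ w i := by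
  simp only [dotProduct, Finset.sum_apply, Finset.mul_sum]
  rw [Finset.sum_comm]

lemma trace_conj_factor {N : Type*} [Fintype N] (r m : Matrix N N ℂ)
    (hr : rᴴ = r) (hm : mᴴ = m) :
    ((m * r)ᴴ * (m * r)).trace = ((r * r) * (m * m)).trace := by
  rw [Matrix.conjTranspose_mul, hm, hr]
  rw [show r * m * (m * r) = r * m * m * r from by rw [mul_assoc, mul_assoc, mul_assoc]]
  rw [Matrix.trace_mul_comm (r * m * m) r]
  rw [show r * (r * m * m) = r * r * (m * m) from by simp only [mul_assoc]]

end Stmt15Aux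

open Stmt15Aux in
/-- if a `d × d` bipartite quantum state `ρ` together with POVMs
`{A_x}`, `{B_y}` (`3d` outcomes each) generates the correlation `Q`, then the partial sums
`A_P = ∑_{x=1}^{2d} A_x` and `B_P = ∑_{y=1}^{2d} B_y` have rank `d`, i.e. are invertible. -/
theorem stmt15 (d : ℕ) (hd : 2 ≤ d) (a : ℝ) (ha : 0 < a) (ha1 : a < 1)
    (z : Fin d → ℝ) (hz : ∀ i, 0 < z i)
    (ρ : Matrix (Fin d × Fin d) (Fin d × Fin d) ℂ)
    (hρ : ρ.PosSemidef) (hρtr : ρ.trace = 1)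
    (A B : (Fin d ⊕ Fin d) ⊕ Fin d → Matrix (Fin d) (Fin d) ℂ)
    (hA : ∀ x, (A x).PosSemidef) (hB : ∀ y, (B y).PosSemidef)
    (hAsum : (∑ x, A x) = 1) (hBsum : (∑ y, B y) = 1)
    (hcorr : ∀ x y, (ρ * (A x ⊗ₖ B y)).trace = (Qmat d a z x y : ℂ)) :
    ((∑ p : Fin d ⊕ Fin d, A (Sum.inl p)).rank = d ∧
      IsUnit (∑ p : Fin d ⊕ Fin d, A (Sum.inl p))) ∧
    ((∑ p : Fin d ⊕ Fin d, B (Sum.inl p)).rank = d ∧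
      IsUnit (∑ p : Fin d ⊕ Fin d, B (Sum.inl p))) := by
  classical
  have hd0 : (0:ℝ) < (d : ℝ) := by
    have : 0 < d := by omega
    exact_mod_cast this
  set r := hρ.sqrt with hrdef
  have hr : rᴴ = r := hρ.posSemidef_sqrt.1
  have hrr : r * r = ρ := hρ.sqrt_mul_self
  set sA : ((Fin d ⊕ Fin d) ⊕ Fin d) → Matrix (Fin d) (Fin d) ℂ := fun x => (hA x).sqrt
    with hsAdef
  set sB : ((Fin d ⊕ Fin d) ⊕ Fin d) → Matrix (Fin d) (Fin d) ℂ := fun y => (hB y).sqrt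
    with hsBdef
  have key : ∀ x y, (((sA x ⊗ₖ sB y) * r)ᴴ * ((sA x ⊗ₖ sB y) * r)).trace
      = (Qmat d a z x y : ℂ) := by
    intro x y
    have hm : (sA x ⊗ₖ sB y)ᴴ = sA x ⊗ₖ sB y := by
      rw [kron_conjTranspose, (hA x).posSemidef_sqrt.1, (hB y).posSemidef_sqrt.1]
    have hmm : (sA x ⊗ₖ sB y) * (sA x ⊗ₖ sB y) = A x ⊗ₖ B y := by
      rw [← mul_kronecker_mul, (hA x).sqrt_mul_self, (hB y).sqrt_mul_self]
    rw [trace_conj_factor r (sA x ⊗ₖ sB y) hr hm, hmm, hrr]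
    exact hcorr x y
  -- the diagonal value is nonzero
  have hQpos : ∀ i : Fin d, (0:ℝ) < Qmat d a z (Sum.inl (Sum.inl i)) (Sum.inl (Sum.inl i)) := by
    intro i
    show (0:ℝ) < a * ((1 / ((d:ℝ) * ((d:ℝ) + 1) ^ 2)) * if i = i then (d : ℝ) ^ 2 else 0)
    rw [if_pos rfl]
    have h1 : (0:ℝ) < (d:ℝ) * ((d:ℝ) + 1) ^ 2 := by
      apply mul_pos hd0
      nlinarith
    have h2 : (0:ℝ) < 1 / ((d:ℝ) * ((d:ℝ) + 1) ^ 2) := by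
      exact one_div_pos.mpr h1
    have h3 : (0:ℝ) < (d:ℝ) ^ 2 := by positivity
    exact mul_pos ha (mul_pos h2 h3)
  have hzero : ∀ k i : Fin d, k ≠ i →
      (sA (Sum.inl (Sum.inl k)) ⊗ₖ sB (Sum.inl (Sum.inl i))) * r = 0 := by
    intro k i hki
    apply eq_zero_of_trace_conj_mul_self
    rw [key]
    have hq : Qmat d a z (Sum.inl (Sum.inl k)) (Sum.inl (Sum.inl i)) = 0 := by
      show a * ((1 / ((d:ℝ) * ((d:ℝ) + 1) ^ 2)) * if k = i then (d : ℝ) ^ 2 else 0) = 0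
      rw [if_neg hki]
      ring
    rw [hq, Complex.ofReal_zero]
  have hnzero : ∀ i : Fin d,
      (sA (Sum.inl (Sum.inl i)) ⊗ₖ sB (Sum.inl (Sum.inl i))) * r ≠ 0 := by
    intro i h
    have h2 := key (Sum.inl (Sum.inl i)) (Sum.inl (Sum.inl i))
    rw [h] at h2
    simp only [conjTranspose_zero, zero_mul, Matrix.trace_zero] at h2
    have hq0 : Qmat d a z (Sum.inl (Sum.inl i)) (Sum.inl (Sum.inl i)) = 0 := by
      exact_mod_cast h2.symm
    exact absurd hq0 (ne_of_gt (hQpos i))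
  -- A side
  have hAunit : IsUnit (∑ p : Fin d ⊕ Fin d, A (Sum.inl p)) := by
    by_contra hnu
    have hdet : (∑ p : Fin d ⊕ Fin d, A (Sum.inl p)).det = 0 := by
      by_contra hdne
      exact hnu ((Matrix.isUnit_iff_isUnit_det _).mpr (isUnit_iff_ne_zero.mpr hdne))
    obtain ⟨v, hv0, hv⟩ := Matrix.exists_mulVec_eq_zero_iff.mpr hdet
    have hquad : ∀ p : Fin d ⊕ Fin d, star v ⬝ᵥ A (Sum.inl p) *ᵥ v = 0 := by
      have h0 : ∑ p : Fin d ⊕ Fin d, star v ⬝ᵥ A (Sum.inl p) *ᵥ v = 0 := by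
        rw [← dot_sum, ← Stmt15Aux.sum_mulVec, hv, dotProduct_zero]
      intro p
      exact (Finset.sum_eq_zero_iff_of_nonneg
        (fun p _ => (hA (Sum.inl p)).dotProduct_mulVec_nonneg v)).mp h0 p (Finset.mem_univ p)
    have hsv : ∀ i : Fin d, sA (Sum.inl (Sum.inl i)) *ᵥ v = 0 :=
      fun i => sqrt_kill (hA _) (hquad (Sum.inl i))
    have H := left_family r (fun i => sA (Sum.inl (Sum.inl i)))
      (fun i => sB (Sum.inl (Sum.inl i))) hzero hnzero
    choose u h1 h2 using H
    exact no_such_family (fun i => sA (Sum.inl (Sum.inl i))) v hv0 u hsv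
      (fun i k hk => h1 i k hk) h2
  -- B side
  have hBunit : IsUnit (∑ p : Fin d ⊕ Fin d, B (Sum.inl p)) := by
    by_contra hnu
    have hdet : (∑ p : Fin d ⊕ Fin d, B (Sum.inl p)).det = 0 := by
      by_contra hdne
      exact hnu ((Matrix.isUnit_iff_isUnit_det _).mpr (isUnit_iff_ne_zero.mpr hdne))
    obtain ⟨w, hw0, hw⟩ := Matrix.exists_mulVec_eq_zero_iff.mpr hdet
    have hquad : ∀ q : Fin d ⊕ Fin d, star w ⬝ᵥ B (Sum.inl q) *ᵥ w = 0 := by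
      have h0 : ∑ q : Fin d ⊕ Fin d, star w ⬝ᵥ B (Sum.inl q) *ᵥ w = 0 := by
        rw [← dot_sum, ← Stmt15Aux.sum_mulVec, hw, dotProduct_zero]
      intro q
      exact (Finset.sum_eq_zero_iff_of_nonneg
        (fun q _ => (hB (Sum.inl q)).dotProduct_mulVec_nonneg w)).mp h0 q (Finset.mem_univ q)
    have hsw : ∀ j : Fin d, sB (Sum.inl (Sum.inl j)) *ᵥ w = 0 :=
      fun j => sqrt_kill (hB _) (hquad (Sum.inl j))
    have H := right_family r (fun i => sA (Sum.inl (Sum.inl i)))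
      (fun i => sB (Sum.inl (Sum.inl i))) hzero hnzero
    choose m h1 h2 using H
    exact no_such_family (fun j => sB (Sum.inl (Sum.inl j))) w hw0 m hsw
      (fun j k hk => h1 j k hk) h2
  refine ⟨⟨?_, hAunit⟩, ⟨?_, hBunit⟩⟩
  · rw [Matrix.rank_of_isUnit _ hAunit, Fintype.card_fin]
  · rw [Matrix.rank_of_isUnit _ hBunit, Fintype.card_fin]
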